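/- Let G be a connected unweighted graph that admits an (a,b,1)-contraction sequence, with integers a, b ≥ 1, in which every round contracts at least one subgraph (a_i ≥ 1 for every i ∈ {1,…,b}). If Z is a set of vertices of G whose pairwise hop distances all exceed 18b, then |Z| ≤ a/b. -/

import Mathlib

open scoped BigOperators
open scoped Classical

noncomputable section

namespace Paper

variable {V : Type}

def IsPartition (Ps : Set (Set V)) : Prop :=
  (∀ v : V, ∃ P ∈ Ps, v ∈ P) ∧
  (∀ P ∈ Ps, ∀ Q ∈ Ps, P ≠ Q → Disjoint P Q) ∧
  (∀ P ∈ Ps, P.Nonempty)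

def quotGraph (G : SimpleGraph V) (Ps : Set (Set V)) : SimpleGraph {D // D ∈ Ps} where
  Adj P Q := P ≠ Q ∧ ∃ u ∈ P.1, ∃ v ∈ Q.1, G.Adj u v
  symm := by
    constructor
    rintro P Q ⟨hne, u, hu, x, hx, hadj⟩
    exact ⟨hne.symm, x, hx, u, hu, hadj.symm⟩
  loopless := by
    constructor
    rintro P ⟨hne, -⟩
    exact hne rfl

structure ContractionSeq [Fintype V] (G : SimpleGraph V) (a b c : ℕ) where
  Ps : ℕ → Set (Set V)
  con : ℕ → Set (Set V)
  ispart : ∀ i ≤ b, IsPartition (Ps i)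
  bot : Ps 0 = {P | ∃ v : V, P = {v}}
  top : Ps b = {Set.univ}
  refines : ∀ i < b, ∀ P ∈ Ps i, ∃ Q ∈ Ps (i + 1), P ⊆ Q
  con_sub : ∀ i < b, con (i + 1) ⊆ Ps (i + 1)
  old_parts : ∀ i < b, ∀ P ∈ Ps (i + 1), P ∉ con (i + 1) → P ∈ Ps i
  contracted : ∀ i < b, ∀ P ∈ con (i + 1),
    ∃ D₀ : Set V, ∃ h₀ : D₀ ∈ ({D | D ∈ Ps i ∧ D ⊆ P} : Set (Set V)),
      ∀ D : Set V, ∀ hD : D ∈ ({D | D ∈ Ps i ∧ D ⊆ P} : Set (Set V)),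
        ∃ wlk : (quotGraph G {D | D ∈ Ps i ∧ D ⊆ P}).Walk ⟨D₀, h₀⟩ ⟨D, hD⟩,
          wlk.length ≤ c
  count : ∑ i ∈ Finset.range b, (con (i + 1)).ncard ≤ a

/-! ### Auxiliary machinery -/

/-- Ball of radius `r` around `z` (in hop distance, via walks). -/
def Ball (G : SimpleGraph V) (z : V) (r : ℕ) : Set V := {u | ∃ p : G.Walk z u, p.length ≤ r}

/-- One step in a quotient graph: stay or move along an edge. -/
def StepRel (G : SimpleGraph V) (Ps : Set (Set V)) (P Q : {D // D ∈ Ps}) : Prop :=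
  P = Q ∨ (quotGraph G Ps).Adj P Q

/-- Lazy chains of length `m` in a quotient graph. -/
def ChainConn (G : SimpleGraph V) (Ps : Set (Set V)) (m : ℕ) (P Q : {D // D ∈ Ps}) : Prop :=
  ∃ f : ℕ → {D // D ∈ Ps}, f 0 = P ∧ f m = Q ∧ ∀ j < m, StepRel G Ps (f j) (f (j + 1))

lemma chain_refl (G : SimpleGraph V) (Ps : Set (Set V)) (P : {D // D ∈ Ps}) :
    ChainConn G Ps 0 P P := ⟨fun _ => P, rfl, rfl, by omega⟩

lemma chain_mono {G : SimpleGraph V} {Ps : Set (Set V)} {m m' : ℕ} {P Q : {D // D ∈ Ps}}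
    (h : ChainConn G Ps m P Q) (hm : m ≤ m') : ChainConn G Ps m' P Q := by
  obtain ⟨f, h0, hme, hstep⟩ := h
  refine ⟨fun t => if t < m then f t else Q, ?_, ?_, ?_⟩
  · by_cases h : 0 < m
    · simpa [h] using h0
    · have hm0 : m = 0 := by omega
      subst hm0
      simpa using hme.symm.trans h0
  · simp [Nat.not_lt.mpr hm]
  · intro j hj
    by_cases h1 : j + 1 < m
    · simpa [h1, (by omega : j < m)] using hstep j (by omega)
    · by_cases h2 : j < m
      · have hjm : j + 1 = m := by omega
        have : (if j + 1 < m then f (j+1) else Q) = f (j + 1) := by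
          rw [if_neg h1, hjm, hme]
        simp only [if_pos h2, this]
        exact hstep j (by omega)
      · simp only [if_neg h1, if_neg h2]
        exact Or.inl rfl

lemma chain_trans {G : SimpleGraph V} {Ps : Set (Set V)} {m n : ℕ} {P Q R : {D // D ∈ Ps}}
    (h1 : ChainConn G Ps m P Q) (h2 : ChainConn G Ps n Q R) : ChainConn G Ps (m + n) P R := by
  obtain ⟨f, hf0, hfm, hfs⟩ := h1
  obtain ⟨g, hg0, hgn, hgs⟩ := h2
  refine ⟨fun t => if t < m then f t else g (t - m), ?_, ?_, ?_⟩
  · by_cases h : 0 < m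
    · simpa [h] using hf0
    · have hm0 : m = 0 := by omega
      subst hm0
      simpa using hg0.trans (hfm.symm.trans hf0)
  · have h1 : ¬ (m + n < m) := by omega
    simp only [if_neg h1, Nat.add_sub_cancel_left, hgn]
  · intro j hj
    by_cases h1 : j + 1 < m
    · simpa [h1, (by omega : j < m)] using hfs j (by omega)
    · by_cases h2 : j < m
      · have hjm : j + 1 = m := by omega
        have : (if j + 1 < m then f (j+1) else g (j + 1 - m)) = f (j + 1) := by
          rw [if_neg h1, hjm, Nat.sub_self, hg0, ← hfm]
        simp only [if_pos h2, this]
        exact hfs j (by omega)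
      · simp only [if_neg h1, if_neg h2]
        have h3 : j + 1 - m = (j - m) + 1 := by omega
        rw [h3]
        exact hgs (j - m) (by omega)

lemma chain_single {G : SimpleGraph V} {Ps : Set (Set V)} {P Q : {D // D ∈ Ps}}
    (h : StepRel G Ps P Q) : ChainConn G Ps 1 P Q := by
  refine ⟨fun t => if t = 0 then P else Q, by simp, by simp, ?_⟩
  intro j hj
  have : j = 0 := by omega
  simpa [this] using h

lemma chain_step {G : SimpleGraph V} {Ps : Set (Set V)} {m : ℕ} {P Q R : {D // D ∈ Ps}}
    (h1 : ChainConn G Ps m P Q) (h : StepRel G Ps Q R) : ChainConn G Ps (m + 1) P R :=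
  chain_trans h1 (chain_single h)

lemma IsPartition.eq_of_mem {Ps : Set (Set V)} (h : IsPartition Ps) {P Q : Set V} {v : V}
    (hP : P ∈ Ps) (hQ : Q ∈ Ps) (hvP : v ∈ P) (hvQ : v ∈ Q) : P = Q := by
  by_contra hne
  exact Set.disjoint_left.mp (h.2.1 P hP Q hQ hne) hvP hvQ

/-- The part of a partition containing a given vertex. -/
def thePart {Ps : Set (Set V)} (h : IsPartition Ps) (v : V) : {D // D ∈ Ps} :=
  ⟨(h.1 v).choose, (h.1 v).choose_spec.1⟩

lemma mem_thePart {Ps : Set (Set V)} (h : IsPartition Ps) (v : V) : v ∈ (thePart h v).1 :=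
  (h.1 v).choose_spec.2

lemma thePart_eq {Ps : Set (Set V)} (h : IsPartition Ps) {v : V} {P : Set V}
    (hP : P ∈ Ps) (hv : v ∈ P) : (thePart h v : Set V) = P :=
  h.eq_of_mem (thePart h v).2 hP (mem_thePart h v) hv

/-- A walk of length ≤ 1 in a quotient graph yields equality or an edge between the sets. -/
lemma walk_le_one {S : Set (Set V)} {G : SimpleGraph V} {A B : {D // D ∈ S}}
    (w : (quotGraph G S).Walk A B) (hw : w.length ≤ 1) :
    A.1 = B.1 ∨ (A ≠ B ∧ ∃ u ∈ A.1, ∃ v ∈ B.1, G.Adj u v) := by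
  cases w with
  | nil => exact Or.inl rfl
  | cons h p =>
    have hp : p.length = 0 := by
      simp only [SimpleGraph.Walk.length_cons] at hw
      omega
    have hc := SimpleGraph.Walk.eq_of_length_eq_zero hp
    subst hc
    exact Or.inr h

section CS

variable [Fintype V] {G : SimpleGraph V} {a b : ℕ} (cs : ContractionSeq G a b 1)

/-- Within a part of round `i+1`, any two round-`i` parts are ≤ 2 apart (lazily). -/
lemma within_part {i : ℕ} (hi : i < b) {P : Set V} (hP : P ∈ cs.Ps (i + 1))
    {w w' : V} (hw : w ∈ P) (hw' : w' ∈ P) :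
    ChainConn G (cs.Ps i) (if P ∈ cs.con (i + 1) then 2 else 0)
      (thePart (cs.ispart i hi.le) w) (thePart (cs.ispart i hi.le) w') := by
  have hpart := cs.ispart i hi.le
  by_cases hc : P ∈ cs.con (i + 1)
  · rw [if_pos hc]
    -- use the contraction star structure
    obtain ⟨D₀, h₀, hstar⟩ := cs.contracted i hi P hc
    -- the part of w is a sub-part of P
    have hsub : ∀ v : V, v ∈ P → (thePart hpart v : Set V) ∈ {D | D ∈ cs.Ps i ∧ D ⊆ P} := by
      intro v hv
      refine ⟨(thePart hpart v).2, ?_⟩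
      obtain ⟨Q, hQ, hPQ⟩ := cs.refines i hi _ (thePart hpart v).2
      have : Q = P := (cs.ispart (i+1) hi).eq_of_mem hQ hP (hPQ (mem_thePart hpart v)) hv
      exact this ▸ hPQ
    have step1 : StepRel G (cs.Ps i) (thePart hpart w) ⟨D₀, h₀.1⟩ := by
      obtain ⟨wlk, hwlk⟩ := hstar _ (hsub w hw)
      rcases walk_le_one wlk hwlk with he | ⟨_, u, hu, v, hv, hadj⟩
      · exact Or.inl (Subtype.ext he.symm)
      · by_cases hD : (thePart hpart w : Set V) = D₀
        · exact Or.inl (Subtype.ext hD)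
        · exact Or.inr ⟨fun hh => hD (congrArg Subtype.val hh), v, hv, u, hu, hadj.symm⟩
    have step2 : StepRel G (cs.Ps i) ⟨D₀, h₀.1⟩ (thePart hpart w') := by
      obtain ⟨wlk, hwlk⟩ := hstar _ (hsub w' hw')
      rcases walk_le_one wlk hwlk with he | ⟨_, u, hu, v, hv, hadj⟩
      · exact Or.inl (Subtype.ext he)
      · by_cases hD : D₀ = (thePart hpart w' : Set V)
        · exact Or.inl (Subtype.ext hD)
        · exact Or.inr ⟨fun hh => hD (congrArg Subtype.val hh), u, hu, v, hv, hadj⟩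
    exact chain_step (chain_single step1) step2
  · rw [if_neg hc]
    have hPi : P ∈ cs.Ps i := cs.old_parts i hi P hP hc
    have e1 : (thePart hpart w : Set V) = P := thePart_eq hpart hPi hw
    have e2 : (thePart hpart w' : Set V) = P := thePart_eq hpart hPi hw'
    have : thePart hpart w = thePart hpart w' := Subtype.ext (e1.trans e2.symm)
    rw [this]
    exact chain_refl _ _ _

/-- A chain witness for the separation between `z` and the complement of `B`. -/
def ZChain (z : V) (B : Set V) (i m : ℕ) : Prop :=
  ∃ P Q : {D // D ∈ cs.Ps i}, z ∈ P.1 ∧ (∃ u ∈ Q.1, u ∉ B) ∧ ChainConn G (cs.Ps i) m P Q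

lemma zchain_top (z : V) {B : Set V} (hB : ∃ u, u ∉ B) : ZChain cs z B b 0 := by
  have hu : Set.univ ∈ cs.Ps b := by rw [cs.top]; rfl
  obtain ⟨u, hu'⟩ := hB
  exact ⟨⟨_, hu⟩, ⟨_, hu⟩, Set.mem_univ z, ⟨u, Set.mem_univ u, hu'⟩, chain_refl _ _ _⟩

lemma zchain_zero {z : V} {r m : ℕ} (h : ZChain cs z (Ball G z r) 0 m) : r < m := by
  obtain ⟨P, Q, hzP, ⟨u, huQ, huB⟩, f, hf0, hfm, hfs⟩ := h
  have hsing : ∀ t : ℕ, ∃ v : V, ((f t) : Set V) = {v} := by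
    intro t
    have h2 := (f t).2
    have h3 : cs.Ps 0 = {P | ∃ v : V, P = {v}} := cs.bot
    exact (Set.ext_iff.mp h3 _).mp h2
  have hz0 : z ∈ ((f 0) : Set V) := by rw [hf0]; exact hzP
  have key : ∀ j, ∀ v : V, v ∈ ((f j) : Set V) → j ≤ m → ∃ p : G.Walk z v, p.length ≤ j := by
    intro j
    induction j with
    | zero =>
      intro v hv _
      obtain ⟨v0, hv0⟩ := hsing 0
      rw [hv0] at hv hz0
      have : v = z := hv.trans hz0.symm
      subst this
      exact ⟨SimpleGraph.Walk.nil, by simp⟩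
    | succ j ih =>
      intro v hv hj
      rcases hfs j (by omega) with heq | ⟨_, x, hx, y, hy, hadj⟩
      · obtain ⟨p, hp⟩ := ih v (by rw [heq]; exact hv) (by omega)
        exact ⟨p, by omega⟩
      · obtain ⟨vj, hvj⟩ := hsing (j + 1)
        rw [hvj] at hv hy
        have hvy : v = y := hv.trans hy.symm
        subst hvy
        obtain ⟨p, hp⟩ := ih x hx (by omega)
        exact ⟨p.concat hadj, by rw [SimpleGraph.Walk.length_concat]; omega⟩
  obtain ⟨p, hp⟩ := key m u (by rw [hfm]; exact huQ) le_rfl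
  by_contra hcon
  exact huB ⟨p, by omega⟩

lemma round_step {i : ℕ} (hi : i < b) {z : V} {B : Set V} {m : ℕ}
    (h : ZChain cs z B (i + 1) m) :
    ZChain cs z B i (m + (2 * ((cs.con (i + 1)) ∩ {Q | Q ⊆ B}).ncard + 2)) := by
  classical
  have hne : ∃ m', ZChain cs z B (i + 1) m' := ⟨m, h⟩
  set M := Nat.find hne with hMdef
  have hMle : M ≤ m := Nat.find_le h
  obtain ⟨P, Q, hzP, ⟨uo, huoQ, huoB⟩, f, hf0, hfM, hfs⟩ := Nat.find_spec hne
  -- (1) no vertex outside B before the end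
  have hinside : ∀ j < M, ∀ u ∈ ((f j) : Set V), u ∈ B := by
    intro j hj u hu
    by_contra hub
    refine absurd ?_ (Nat.find_min hne hj)
    exact ⟨P, f j, hzP, ⟨u, hu, hub⟩, f, hf0, rfl, fun t ht => hfs t (by omega)⟩
  -- (2) injectivity up to M
  have hinj : ∀ j j', j < j' → j' ≤ M → f j ≠ f j' := by
    intro j j' hjj hj'M heq
    have hlt : M - (j' - j) < M := by omega
    refine absurd ?_ (Nat.find_min hne hlt)
    refine ⟨P, Q, hzP, ⟨uo, huoQ, huoB⟩,
      fun t => if t < j then f t else f (t + (j' - j)), ?_, ?_, ?_⟩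
    · by_cases h0 : 0 < j
      · simpa [h0] using hf0
      · have hj0 : j = 0 := by omega
        subst hj0
        simpa using heq.symm.trans hf0
    · have hge : ¬ (M - (j' - j) < j) := by omega
      show (if M - (j' - j) < j then f (M - (j' - j)) else f (M - (j' - j) + (j' - j))) = Q
      rw [if_neg hge]
      have : M - (j' - j) + (j' - j) = M := by omega
      rw [this, hfM]
    · intro t ht
      by_cases h1 : t + 1 < j
      · simpa [h1, (by omega : t < j)] using hfs t (by omega)
      · by_cases h2 : t < j
        · have htj : t + 1 = j := by omega
          have e1 : (if t + 1 < j then f (t+1) else f (t + 1 + (j' - j))) = f (t + 1) := by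
            rw [if_neg h1]
            have : t + 1 + (j' - j) = j' := by omega
            rw [this, ← heq, htj]
          simp only [if_pos h2, e1]
          exact hfs t (by omega)
        · simp only [if_neg h1, if_neg h2]
          have e2 : t + 1 + (j' - j) = (t + (j' - j)) + 1 := by omega
          rw [e2]
          exact hfs (t + (j' - j)) (by omega)
  -- set up round-i data
  have hpart := cs.ispart i hi.le
  set pt : V → {D // D ∈ cs.Ps i} := thePart hpart with hpt
  set cnt : ℕ → ℕ := fun j =>
    ((Finset.range (j + 1)).filter (fun t => ((f t) : Set V) ∈ cs.con (i + 1))).card with hcnt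
  -- forward construction of the round-i chain
  have key : ∀ j, j ≤ M → ∀ w ∈ ((f j) : Set V),
      ChainConn G (cs.Ps i) (j + 2 * cnt j) (pt z) (pt w) := by
    intro j
    induction j with
    | zero =>
      intro _ w hw
      have hz0 : z ∈ ((f 0) : Set V) := by rw [hf0]; exact hzP
      have hwp := within_part cs hi (f 0).2 hz0 hw
      refine chain_mono hwp ?_
      by_cases hc : ((f 0) : Set V) ∈ cs.con (i + 1) <;>
        simp [hcnt, hc, Finset.filter_singleton, Finset.range_one]
    | succ j ih =>
      intro hj w hw
      have hcmono : cnt j ≤ cnt (j + 1) :=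
        Finset.card_le_card (Finset.filter_subset_filter _
          (Finset.range_subset_range.mpr (by omega)))
      have hcsucc : cnt (j + 1) = cnt j +
          (if ((f (j+1)) : Set V) ∈ cs.con (i + 1) then 1 else 0) := by
        simp only [hcnt]
        rw [Finset.range_add_one, Finset.filter_insert]
        by_cases hc : ((f (j+1)) : Set V) ∈ cs.con (i + 1)
        · rw [if_pos hc, if_pos hc, Finset.card_insert_of_notMem (by simp)]
        · rw [if_neg hc, if_neg hc]
          omega
      rcases hfs j (by omega) with heq | ⟨hne', x, hx, y, hy, hadj⟩
      · have hw' : w ∈ ((f j) : Set V) := by rw [heq]; exact hw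
        exact chain_mono (ih (by omega) w hw') (by omega)
      · have ihx := ih (by omega) x hx
        have hstep : StepRel G (cs.Ps i) (pt x) (pt y) := by
          by_cases hxy : pt x = pt y
          · exact Or.inl hxy
          · exact Or.inr ⟨hxy, x, mem_thePart hpart x, y, mem_thePart hpart y, hadj⟩
        have hwp := within_part cs hi (f (j+1)).2 hy hw
        have := chain_trans (chain_step ihx hstep) hwp
        refine chain_mono this ?_
        by_cases hc : ((f (j+1)) : Set V) ∈ cs.con (i + 1) <;>
          simp only [hc, if_true, if_false] at hcsucc ⊢ <;> omega
  -- conclude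
  have hfinal := key M le_rfl uo (by rw [hfM]; exact huoQ)
  -- bound the count
  have hcard : ((Finset.range M).filter (fun t => ((f t) : Set V) ∈ cs.con (i + 1))).card
      ≤ ((cs.con (i + 1)) ∩ {Q | Q ⊆ B}).ncard := by
    set s := (Finset.range M).filter (fun t => ((f t) : Set V) ∈ cs.con (i + 1)) with hs
    have hinjOn : Set.InjOn (fun t => ((f t) : Set V)) ↑s := by
      intro t1 h1 t2 h2 he
      simp only [hs, Finset.coe_filter, Set.mem_setOf_eq, Finset.mem_range] at h1 h2
      by_contra hne12
      rcases Nat.lt_or_ge t1 t2 with hlt | hge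
      · exact hinj t1 t2 hlt (by omega) (Subtype.ext he)
      · have hlt : t2 < t1 := by omega
        exact hinj t2 t1 hlt (by omega) (Subtype.ext he.symm)
    have himg : (fun t => ((f t) : Set V)) '' ↑s ⊆ (cs.con (i + 1)) ∩ {Q | Q ⊆ B} := by
      rintro T ⟨t, ht, rfl⟩
      simp only [hs, Finset.coe_filter, Set.mem_setOf_eq, Finset.mem_range] at ht
      exact ⟨ht.2, fun u hu => hinside t ht.1 u hu⟩
    calc s.card = ((fun t => ((f t) : Set V)) '' ↑s).ncard := by
            rw [Set.ncard_image_of_injOn hinjOn, Set.ncard_coe_finset]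
      _ ≤ _ := Set.ncard_le_ncard himg (Set.toFinite _)
  have hcntM : cnt M ≤ ((cs.con (i + 1)) ∩ {Q | Q ⊆ B}).ncard + 1 := by
    have : cnt M ≤ ((Finset.range M).filter
        (fun t => ((f t) : Set V) ∈ cs.con (i + 1))).card + 1 := by
      simp only [hcnt]
      rw [Finset.range_add_one, Finset.filter_insert]
      by_cases hc : ((f M) : Set V) ∈ cs.con (i + 1)
      · rw [if_pos hc]
        exact le_trans (Finset.card_insert_le _ _) (by omega)
      · rw [if_neg hc]
        omega
    omega
  refine ⟨pt z, pt uo, mem_thePart hpart z, ⟨uo, mem_thePart hpart uo, huoB⟩, ?_⟩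
  exact chain_mono hfinal (by omega)

lemma zchain_all (z : V) {B : Set V} (hB : ∃ u, u ∉ B) :
    ∀ k, k ≤ b → ZChain cs z B (b - k)
      (∑ t ∈ Finset.Ico (b - k) b, (2 * ((cs.con (t + 1)) ∩ {Q | Q ⊆ B}).ncard + 2)) := by
  intro k
  induction k with
  | zero =>
    intro _
    simpa using zchain_top cs z hB
  | succ k ih =>
    intro hk
    have h1 := ih (by omega)
    have hsucc : b - (k + 1) + 1 = b - k := by omega
    rw [← hsucc] at h1
    have h2 := round_step cs (by omega : b - (k + 1) < b) h1
    have hsum : ∑ t ∈ Finset.Ico (b - (k + 1)) b,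
          (2 * ((cs.con (t + 1)) ∩ {Q | Q ⊆ B}).ncard + 2)
        = (∑ t ∈ Finset.Ico (b - (k + 1) + 1) b,
            (2 * ((cs.con (t + 1)) ∩ {Q | Q ⊆ B}).ncard + 2))
          + (2 * ((cs.con (b - (k + 1) + 1)) ∩ {Q | Q ⊆ B}).ncard + 2) := by
      rw [Finset.sum_eq_sum_Ico_succ_bot (by omega : b - (k + 1) < b)]
      ring
    rw [hsum]
    exact h2

/-- Per-vertex charging: at least `b` contraction events happen inside the ball. -/
lemma charged_ge (hb : 1 ≤ b) {z : V} (hout : ∃ u, u ∉ Ball G z (9 * b)) :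
    b ≤ ∑ t ∈ Finset.range b, ((cs.con (t + 1)) ∩ {Q | Q ⊆ Ball G z (9 * b)}).ncard := by
  have h := zchain_all cs z hout b le_rfl
  rw [Nat.sub_self] at h
  have h9 := zchain_zero cs h
  rw [← Finset.range_eq_Ico] at h9
  have hsplit : ∑ t ∈ Finset.range b,
        (2 * ((cs.con (t + 1)) ∩ {Q | Q ⊆ Ball G z (9 * b)}).ncard + 2)
      = 2 * (∑ t ∈ Finset.range b,
          ((cs.con (t + 1)) ∩ {Q | Q ⊆ Ball G z (9 * b)}).ncard) + 2 * b := by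
    rw [Finset.sum_add_distrib, Finset.mul_sum]
    simp [Finset.sum_const, Finset.card_range, mul_comm]
  rw [hsplit] at h9
  omega

end CS

theorem statement_7 {V : Type} [Fintype V] (G : SimpleGraph V) (hG : G.Connected)
    (a b : ℕ) (ha : 1 ≤ a) (hb : 1 ≤ b)
    (cs : ContractionSeq G a b 1)
    (hpos : ∀ i < b, (cs.con (i + 1)).Nonempty)
    (Z : Set V)
    (hZ : ∀ u ∈ Z, ∀ v ∈ Z, u ≠ v → ∀ p : G.Walk u v, 18 * b < p.length) :
    (Z.ncard : ℝ) ≤ (a : ℝ) / b := by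
  classical
  have hbR : (0 : ℝ) < b := by exact_mod_cast hb
  have hab : b ≤ a := by
    calc b = ∑ _t ∈ Finset.range b, 1 := by simp
      _ ≤ ∑ t ∈ Finset.range b, (cs.con (t + 1)).ncard := by
          refine Finset.sum_le_sum fun t ht => ?_
          have := (Set.ncard_pos (Set.toFinite _)).mpr (hpos t (by simpa using ht))
          omega
      _ ≤ a := cs.count
  by_cases hsmall : Z.ncard ≤ 1
  · calc (Z.ncard : ℝ) ≤ 1 := by exact_mod_cast hsmall
      _ ≤ (a : ℝ) / b := by
        rw [le_div_iff₀ hbR, one_mul]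
        exact_mod_cast hab
  · push_neg at hsmall
    have hZfin : Z.Finite := Set.toFinite Z
    have hper : ∀ z ∈ Z, b ≤ ∑ t ∈ Finset.range b,
        ((cs.con (t + 1)) ∩ {Q | Q ⊆ Ball G z (9 * b)}).ncard := by
      intro z hz
      obtain ⟨z', hz', hzz'⟩ := Set.exists_ne_of_one_lt_ncard hsmall z
      refine charged_ge cs hb ⟨z', fun hball => ?_⟩
      obtain ⟨p, hp⟩ := hball
      have := hZ z hz z' hz' (Ne.symm hzz') p
      omega
    have hswap : ∀ t ∈ Finset.range b,
        ∑ z ∈ hZfin.toFinset, ((cs.con (t + 1)) ∩ {Q | Q ⊆ Ball G z (9 * b)}).ncard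
          ≤ (cs.con (t + 1)).ncard := by
      intro t ht
      have ht' : t < b := by simpa using ht
      set F : V → Finset (Set V) := fun z =>
        (Set.toFinite ((cs.con (t + 1)) ∩ {Q | Q ⊆ Ball G z (9 * b)})).toFinset with hF
      have hdisj : ∀ z1 ∈ hZfin.toFinset, ∀ z2 ∈ hZfin.toFinset, z1 ≠ z2 →
          Disjoint (F z1) (F z2) := by
        intro z1 hz1 z2 hz2 hne12
        rw [Finset.disjoint_left]
        intro T hT1 hT2
        rw [hF, Set.Finite.mem_toFinset] at hT1 hT2
        obtain ⟨q, hq⟩ : T.Nonempty :=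
          (cs.ispart (t + 1) (by omega)).2.2 T (cs.con_sub t ht' hT1.1)
        obtain ⟨p1, hp1⟩ := hT1.2 hq
        obtain ⟨p2, hp2⟩ := hT2.2 hq
        have hlen := hZ z1 (hZfin.mem_toFinset.mp hz1) z2 (hZfin.mem_toFinset.mp hz2) hne12
          (p1.append p2.reverse)
        rw [SimpleGraph.Walk.length_append, SimpleGraph.Walk.length_reverse] at hlen
        omega
      calc ∑ z ∈ hZfin.toFinset, ((cs.con (t + 1)) ∩ {Q | Q ⊆ Ball G z (9 * b)}).ncard
          = ∑ z ∈ hZfin.toFinset, (F z).card := by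
            refine Finset.sum_congr rfl fun z _ => ?_
            rw [hF, Set.ncard_eq_toFinset_card _ (Set.toFinite _)]
        _ = (hZfin.toFinset.biUnion F).card := (Finset.card_biUnion hdisj).symm
        _ ≤ ((Set.toFinite (cs.con (t + 1))).toFinset).card := by
            refine Finset.card_le_card ?_
            intro T hT
            rw [Finset.mem_biUnion] at hT
            obtain ⟨z, _, hTz⟩ := hT
            rw [hF, Set.Finite.mem_toFinset] at hTz
            rw [Set.Finite.mem_toFinset]
            exact hTz.1
        _ = (cs.con (t + 1)).ncard := (Set.ncard_eq_toFinset_card _ (Set.toFinite _)).symm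
    have hmain : b * Z.ncard ≤ a := by
      have h1 : b * Z.ncard ≤ ∑ z ∈ hZfin.toFinset, ∑ t ∈ Finset.range b,
          ((cs.con (t + 1)) ∩ {Q | Q ⊆ Ball G z (9 * b)}).ncard := by
        calc b * Z.ncard = ∑ _z ∈ hZfin.toFinset, b := by
              rw [Finset.sum_const, Set.ncard_eq_toFinset_card _ hZfin]
              ring
          _ ≤ _ := Finset.sum_le_sum fun z hzz => hper z (hZfin.mem_toFinset.mp hzz)
      have h2 : ∑ z ∈ hZfin.toFinset, ∑ t ∈ Finset.range b,
          ((cs.con (t + 1)) ∩ {Q | Q ⊆ Ball G z (9 * b)}).ncard ≤ a := by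
        rw [Finset.sum_comm]
        calc _ ≤ ∑ t ∈ Finset.range b, (cs.con (t + 1)).ncard :=
              Finset.sum_le_sum hswap
          _ ≤ a := cs.count
      omega
    rw [le_div_iff₀ hbR]
    rw [mul_comm] at hmain
    exact_mod_cast hmain

end Paper
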